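/- Let {G_i}_{i∈I} be a family of profinite groups such that every closed subgroup of each G_i has a closed permutable complement. Then every closed subgroup of the cartesian product ∏_{i∈I} G_i (with the product topology) has a closed permutable complement. -/

import Mathlib

open Pointwise

/-- The cartesian product of a family of profinite groups, in each of which every closed
subgroup has a closed permutable complement, again has this property. -/
theorem stmt5 {I : Type*} (G : I → Type*) [∀ i, Group (G i)] [∀ i, TopologicalSpace (G i)]
    [∀ i, IsTopologicalGroup (G i)] [∀ i, CompactSpace (G i)] [∀ i, T2Space (G i)]
    [∀ i, TotallyDisconnectedSpace (G i)]
    (hC : ∀ i, ∀ H : Subgroup (G i), IsClosed (H : Set (G i)) → ∃ K : Subgroup (G i),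
      IsClosed (K : Set (G i)) ∧ (H : Set (G i)) * (K : Set (G i)) = Set.univ ∧ H ⊓ K = ⊥) :
    ∀ H : Subgroup (∀ i, G i), IsClosed (H : Set (∀ i, G i)) → ∃ K : Subgroup (∀ i, G i),
      IsClosed (K : Set (∀ i, G i)) ∧
      (H : Set (∀ i, G i)) * (K : Set (∀ i, G i)) = Set.univ ∧ H ⊓ K = ⊥ := by
  intro H hH
  classical
  -- `N J` : the subgroup of elements trivial on `J`
  set N : Set I → Subgroup (∀ i, G i) := fun J => Subgroup.pi J (fun _ => ⊥) with hN
  have memN : ∀ (J : Set I) (x : ∀ i, G i), x ∈ N J ↔ ∀ i ∈ J, x i = 1 := by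
    intro J x
    simp [hN, Subgroup.mem_pi, Subgroup.mem_bot]
  -- the poset for Zorn's lemma
  set S : Set (Set I × (Subgroup (∀ i, G i))ᵒᵈ) :=
    {p | IsClosed ((OrderDual.ofDual p.2 : Subgroup (∀ i, G i)) : Set (∀ i, G i)) ∧
         N p.1 ≤ OrderDual.ofDual p.2 ∧
         (H : Set (∀ i, G i)) * ((OrderDual.ofDual p.2 : Subgroup (∀ i, G i)) : Set (∀ i, G i))
           = Set.univ ∧
         H ⊓ OrderDual.ofDual p.2 ≤ N p.1} with hS
  have hx₀ : ((∅ : Set I), OrderDual.toDual (⊤ : Subgroup (∀ i, G i))) ∈ S := by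
    simp only [hS, Set.mem_setOf_eq, OrderDual.ofDual_toDual]
    refine ⟨by simpa using isClosed_univ, le_top, ?_, ?_⟩
    · ext g
      simp only [Set.mem_univ, iff_true, Subgroup.coe_top, Set.mem_mul]
      exact ⟨1, H.one_mem, g, trivial, one_mul g⟩
    · intro x _
      rw [memN]
      intro i hi
      exact absurd hi (Set.notMem_empty i)
  have hchainub : ∀ c ⊆ S, IsChain (· ≤ ·) c → ∀ y ∈ c, ∃ ub ∈ S, ∀ z ∈ c, z ≤ ub := by
    intro c hcS hchain y hyc
    haveI : Nonempty c := ⟨⟨y, hyc⟩⟩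
    set Jc : Set I := ⋃ p : c, (p : Set I × (Subgroup (∀ i, G i))ᵒᵈ).1 with hJc
    set Kc : Subgroup (∀ i, G i) :=
      ⨅ p : c, OrderDual.ofDual (p : Set I × (Subgroup (∀ i, G i))ᵒᵈ).2 with hKc
    have hKcmem : ∀ x, x ∈ Kc ↔ ∀ p : c,
        x ∈ OrderDual.ofDual (p : Set I × (Subgroup (∀ i, G i))ᵒᵈ).2 := by
      intro x; rw [hKc]; exact Subgroup.mem_iInf
    refine ⟨(Jc, OrderDual.toDual Kc), ?_, ?_⟩
    · simp only [hS, Set.mem_setOf_eq, OrderDual.ofDual_toDual]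
      refine ⟨?_, ?_, ?_, ?_⟩
      · rw [hKc, Subgroup.coe_iInf]
        exact isClosed_iInter fun p => (hcS p.2).1
      · intro x hx
        rw [memN] at hx
        rw [hKcmem]
        intro p
        refine (hcS p.2).2.1 ?_
        rw [memN]
        intro i hi
        exact hx i (Set.mem_iUnion.mpr ⟨p, hi⟩)
      · apply Set.eq_univ_of_univ_subset
        intro g _
        set t : c → Set (∀ i, G i) := fun p =>
          (H : Set (∀ i, G i)) ∩
            ((fun x => x⁻¹ * g) ⁻¹'
              ((OrderDual.ofDual (p : Set I × (Subgroup (∀ i, G i))ᵒᵈ).2 :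
                Subgroup (∀ i, G i)) : Set (∀ i, G i))) with ht
        have htcl : ∀ p, IsClosed (t p) := fun p =>
          hH.inter ((hcS p.2).1.preimage (by fun_prop))
        have htne : ∀ p, (t p).Nonempty := by
          intro p
          have hg : g ∈ (H : Set (∀ i, G i)) *
              ((OrderDual.ofDual (p : Set I × (Subgroup (∀ i, G i))ᵒᵈ).2 :
                Subgroup (∀ i, G i)) : Set (∀ i, G i)) := by
            rw [(hcS p.2).2.2.1]; trivial
          obtain ⟨h, hh, k, hk, rfl⟩ := Set.mem_mul.mp hg
          exact ⟨h, hh, by simpa using hk⟩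
        have htdir : Directed (· ⊇ ·) t := by
          intro p q
          rcases hchain.total p.2 q.2 with hle | hle
          · exact ⟨q, fun x hx => ⟨hx.1, hle.2 hx.2⟩, le_refl _⟩
          · exact ⟨p, le_refl _, fun x hx => ⟨hx.1, hle.2 hx.2⟩⟩
        obtain ⟨x, hx⟩ := IsCompact.nonempty_iInter_of_directed_nonempty_isCompact_isClosed
          t htdir htne (fun p => (htcl p).isCompact) htcl
        simp only [Set.mem_iInter] at hx
        refine Set.mem_mul.mpr ⟨x, (hx ⟨y, hyc⟩).1, x⁻¹ * g, ?_, by group⟩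
        rw [SetLike.mem_coe, hKcmem]
        exact fun p => (hx p).2
      · intro x hx
        rw [memN]
        intro i hi
        obtain ⟨p, hip⟩ := Set.mem_iUnion.mp hi
        have hxp : x ∈ H ⊓ OrderDual.ofDual (p : Set I × (Subgroup (∀ i, G i))ᵒᵈ).2 :=
          ⟨hx.1, (hKcmem x).mp hx.2 p⟩
        have := (hcS p.2).2.2.2 hxp
        rw [memN] at this
        exact this i hip
    · intro z hz
      constructor
      · exact Set.subset_iUnion_of_subset ⟨z, hz⟩ (le_refl _)
      · show Kc ≤ OrderDual.ofDual z.2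
        rw [hKc]
        exact iInf_le _ (⟨z, hz⟩ : c)
  obtain ⟨m, -, hm⟩ := zorn_le_nonempty₀ S hchainub _ hx₀
  -- `m` is maximal; show its index set is everything, then conclude
  set K : Subgroup (∀ i, G i) := OrderDual.ofDual m.2 with hK
  obtain ⟨hKcl, hKN, hKmul, hKint⟩ := hm.prop
  have hJuniv : m.1 = Set.univ := by
    by_contra hne
    obtain ⟨i₀, hi₀⟩ : ∃ i₀, i₀ ∉ m.1 := by
      by_contra h
      push_neg at h
      exact hne (Set.eq_univ_of_forall h)
    -- complement the projection of `H ⊓ K` at coordinate `i₀`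
    set L : Subgroup (G i₀) := (H ⊓ K).map (Pi.evalMonoidHom G i₀) with hL
    have hHKcl : IsClosed ((H ⊓ K : Subgroup (∀ i, G i)) : Set (∀ i, G i)) := by
      rw [Subgroup.coe_inf]; exact hH.inter hKcl
    have hLcl : IsClosed (L : Set (G i₀)) := by
      rw [hL, Subgroup.coe_map]
      exact (hHKcl.isCompact.image (continuous_apply i₀)).isClosed
    obtain ⟨M, hMcl, hMmul, hMint⟩ := hC i₀ L hLcl
    set K' : Subgroup (∀ i, G i) := K ⊓ Subgroup.comap (Pi.evalMonoidHom G i₀) M with hK'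
    have hz : (insert i₀ m.1, OrderDual.toDual K') ∈ S := by
      simp only [hS, Set.mem_setOf_eq, OrderDual.ofDual_toDual]
      refine ⟨?_, ?_, ?_, ?_⟩
      · rw [hK', Subgroup.coe_inf]
        exact hKcl.inter (hMcl.preimage (continuous_apply i₀))
      · intro x hx
        rw [memN] at hx
        refine Subgroup.mem_inf.mpr ⟨hKN ?_, ?_⟩
        · rw [memN]
          exact fun i hi => hx i (Set.mem_insert_of_mem _ hi)
        · rw [Subgroup.mem_comap]
          have : x i₀ = 1 := hx i₀ (Set.mem_insert _ _)
          simpa [this] using M.one_mem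
      · apply Set.eq_univ_of_univ_subset
        intro g _
        have hg : g ∈ (H : Set (∀ i, G i)) * (K : Set (∀ i, G i)) := by
          rw [hKmul]; trivial
        obtain ⟨h, hh, k, hk, rfl⟩ := Set.mem_mul.mp hg
        have hk0 : k i₀ ∈ (L : Set (G i₀)) * (M : Set (G i₀)) := by
          rw [hMmul]; trivial
        obtain ⟨l, hl, mm, hmm, hlm⟩ := Set.mem_mul.mp hk0
        obtain ⟨x, hxHK, hxl⟩ := Subgroup.mem_map.mp hl
        refine Set.mem_mul.mpr ⟨h * x, H.mul_mem hh hxHK.1, x⁻¹ * k,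
          Subgroup.mem_inf.mpr ⟨K.mul_mem (K.inv_mem hxHK.2) hk, ?_⟩, by group⟩
        rw [Subgroup.mem_comap]
        have : (Pi.evalMonoidHom G i₀) (x⁻¹ * k) = mm := by
          simp only [map_mul, map_inv]
          have hx0 : (Pi.evalMonoidHom G i₀) x = l := hxl
          rw [hx0]
          have : k i₀ = l * mm := hlm.symm
          simp only [Pi.evalMonoidHom_apply]
          rw [this]
          group
        rw [this]
        exact hmm
      · intro x hx
        rw [memN]
        intro i hi
        rcases Set.mem_insert_iff.mp hi with h1 | h2
        · subst h1
          have hxL : x i ∈ L := Subgroup.mem_map.mpr ⟨x, ⟨hx.1, hx.2.1⟩, rfl⟩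
          have hxM : x i ∈ M := Subgroup.mem_comap.mp hx.2.2
          have : x i ∈ L ⊓ M := ⟨hxL, hxM⟩
          rwa [hMint, Subgroup.mem_bot] at this
        · have : x ∈ N m.1 := hKint ⟨hx.1, hx.2.1⟩
          rw [memN] at this
          exact this i h2
    have hle : m ≤ (insert i₀ m.1, OrderDual.toDual K') := by
      refine ⟨Set.subset_insert _ _, ?_⟩
      show K' ≤ K
      exact inf_le_left
    have := hm.le_of_ge hz hle
    exact hi₀ (this.1 (Set.mem_insert _ _))
  refine ⟨K, hKcl, hKmul, le_antisymm ?_ bot_le⟩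
  intro x hx
  have := hKint hx
  rw [hJuniv, memN] at this
  rw [Subgroup.mem_bot]
  funext i
  exact this i trivial
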